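/- arXiv:1905.02588 — 2 statements merged into one kernel-verified Lean document; each statement's English description precedes it below -/
import Mathlib

section
/- For every z in the open unit disk, the integral over the unit disk of (1 - |ζ|²)·|G(z,ζ)| dσ(ζ) equals (1 - |z|²)(3 - |z|²)/16, and in particular is at most 3(1 - |z|²)/16. -/
open MeasureTheory Complex Real Set intervalIntegral

lemma slitlem (c w : ℂ) (hc : ‖c‖ < 1) (hw : ‖w‖ ≤ 1) : (1 - c * w) ∈ Complex.slitPlane := by
  rw [sub_eq_add_neg]
  apply Complex.mem_slitPlane_of_norm_lt_one
  rw [norm_neg, norm_mul]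
  calc ‖c‖ * ‖w‖ ≤ ‖c‖ * 1 := mul_le_mul_of_nonneg_left hw (norm_nonneg _)
    _ < 1 := by simpa using hc

lemma meanvalue (c : ℂ) (hc : ‖c‖ < 1) :
    (∫ θ in (0:ℝ)..(2*π), Real.log ‖1 - c * Complex.exp (θ * Complex.I)‖) = 0 := by
  set F : ℂ → ℂ := fun w => Complex.log (1 - c * w) with hF
  have hdiff : ∀ w ∈ Metric.closedBall (0:ℂ) 1, DifferentiableAt ℂ F w := by
    intro w hw
    simp only [Metric.mem_closedBall, dist_zero_right] at hw
    have h1 : DifferentiableAt ℂ (fun w : ℂ => 1 - c * w) w :=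
      (differentiableAt_const _).sub ((differentiableAt_const _).mul differentiableAt_id)
    exact (Complex.differentiableAt_log (slitlem c w hc hw)).comp w h1
  have hdc : DiffContOnCl ℂ F (Metric.ball (0:ℂ) 1) := by
    constructor
    · intro w hw
      exact (hdiff w (Metric.ball_subset_closedBall hw)).differentiableWithinAt
    · rw [closure_ball (0:ℂ) one_ne_zero]
      intro w hw
      exact (hdiff w hw).continuousAt.continuousWithinAt
  have key := hdc.circleIntegral_sub_inv_smul (w := 0) (by simp)
  have hF0 : F 0 = 0 := by simp [hF]
  rw [hF0, smul_zero] at key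
  rw [circleIntegral] at key
  have hint : ∀ θ : ℝ, deriv (circleMap 0 1) θ • (circleMap 0 1 θ - 0)⁻¹ • F (circleMap 0 1 θ)
      = Complex.I * F (Complex.exp (θ * Complex.I)) := by
    intro θ
    have hne : circleMap 0 1 θ ≠ 0 := circleMap_ne_center one_ne_zero
    rw [deriv_circleMap]
    simp only [sub_zero, smul_eq_mul]
    field_simp [circleMap]
    rw [mul_comm I]; simp [circleMap]
  simp only [hint] at key
  rw [intervalIntegral.integral_const_mul] at key
  have h2 : (∫ θ in (0:ℝ)..(2*π), F (Complex.exp (θ * Complex.I))) = 0 := by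
    rcases mul_eq_zero.mp key with h | h
    · exact absurd h Complex.I_ne_zero
    · exact h
  have hcont : Continuous fun θ : ℝ => F (Complex.exp (θ * Complex.I)) := by
    rw [continuous_iff_continuousAt]
    intro θ
    have habs : ‖Complex.exp ((θ:ℂ) * Complex.I)‖ ≤ 1 := by
      rw [Complex.norm_exp_ofReal_mul_I]
    have hin : ContinuousAt (fun t : ℝ => (1 - c * Complex.exp (t * Complex.I))) θ := by
      fun_prop
    show ContinuousAt (Complex.log ∘ fun t : ℝ => (1 - c * Complex.exp (t * Complex.I))) θ
    exact ContinuousAt.comp (continuousAt_clog (slitlem _ _ hc habs)) hin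
  have hInt : IntervalIntegrable (fun θ : ℝ => F (Complex.exp (θ * Complex.I)))
      volume 0 (2*π) := hcont.intervalIntegrable _ _
  have h3 : (fun θ : ℝ => Real.log ‖1 - c * Complex.exp (θ * Complex.I)‖)
      = fun θ : ℝ => RCLike.re (F (Complex.exp (θ * Complex.I))) := by
    funext θ
    simp [hF, Complex.log_re]
  rw [h3]
  have hle : (0:ℝ) ≤ 2*π := by positivity
  rw [intervalIntegral.integral_of_le hle, integral_re hInt.1]
  rw [intervalIntegral.integral_of_le hle] at h2
  rw [h2]
  simp


/-- Green function of the unit disk. -/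
noncomputable def greenD (z ζ : ℂ) : ℝ :=
  (1 / (2 * Real.pi)) * Real.log ‖(1 - z * (starRingEnd ℂ) ζ) / (z - ζ)‖

lemma nexp (θ : ℝ) : ‖Complex.exp (θ * Complex.I)‖ = 1 := by
  rw [Complex.norm_exp_ofReal_mul_I]


lemma contlog (c : ℂ) (hc : ‖c‖ < 1) :
    Continuous fun θ : ℝ => Real.log ‖1 - c * Complex.exp (θ * Complex.I)‖ := by
  rw [continuous_iff_continuousAt]
  intro θ
  have hne : ‖1 - c * Complex.exp (θ * Complex.I)‖ ≠ 0 := by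
    rw [norm_ne_zero_iff]
    exact Complex.slitPlane_ne_zero (slitlem c _ hc (le_of_eq (nexp θ)))
  show ContinuousAt ((Real.log ∘ Norm.norm) ∘ fun θ : ℝ => 1 - c * Complex.exp (θ * Complex.I)) θ
  exact ContinuousAt.comp ((Real.continuousAt_log hne).comp continuousAt_id.norm) (by fun_prop)

lemma periodiclog (c : ℂ) :
    Function.Periodic (fun θ : ℝ => Real.log ‖1 - c * Complex.exp (θ * Complex.I)‖) (2*π) := by
  intro θ
  simp only
  congr 3
  push_cast
  rw [add_mul, Complex.exp_add]
  simp [Complex.exp_two_pi_mul_I]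

lemma meanvalue' (c : ℂ) (hc : ‖c‖ < 1) :
    (∫ θ in Ioo (-π) π, Real.log ‖1 - c * Complex.exp (θ * Complex.I)‖) = 0 := by
  have hle : (-π:ℝ) ≤ π := by linarith [Real.pi_pos]
  calc (∫ θ in Ioo (-π) π, Real.log ‖1 - c * Complex.exp (θ * Complex.I)‖)
      = ∫ θ in Ioc (-π) π, Real.log ‖1 - c * Complex.exp (θ * Complex.I)‖ :=
        integral_Ioc_eq_integral_Ioo.symm
    _ = ∫ θ in (-π)..π, Real.log ‖1 - c * Complex.exp (θ * Complex.I)‖ :=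
        (intervalIntegral.integral_of_le hle).symm
    _ = ∫ θ in (-π)..(-π + 2*π), Real.log ‖1 - c * Complex.exp (θ * Complex.I)‖ := by
        congr 1
        ring
    _ = ∫ θ in (0:ℝ)..(0 + 2*π), Real.log ‖1 - c * Complex.exp (θ * Complex.I)‖ :=
        (periodiclog c).intervalIntegral_add_eq (-π) 0
    _ = 0 := by rw [zero_add]; exact meanvalue c hc

lemma meanvalue'' (c : ℂ) (hc : ‖c‖ < 1) :
    (∫ θ in Ioo (-π) π, Real.log ‖1 - c * Complex.exp (-(θ * Complex.I))‖) = 0 := by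
  have : ∀ θ : ℝ, ‖1 - c * Complex.exp (-(θ * Complex.I))‖
      = ‖1 - (starRingEnd ℂ) c * Complex.exp (θ * Complex.I)‖ := by
    intro θ
    rw [← RCLike.norm_conj (1 - (starRingEnd ℂ) c * Complex.exp (θ * Complex.I))]
    congr 1
    rw [map_sub, map_one, map_mul, Complex.conj_conj, ← Complex.exp_conj]
    congr 2
    simp
  simp_rw [this]
  exact meanvalue' _ (by rwa [RCLike.norm_conj])

lemma vol_Ioo : (volume (Ioo (-π) π)).toReal = 2*π := by
  rw [Real.volume_Ioo, ENNReal.toReal_ofReal (by linarith [Real.pi_pos])]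
  ring

lemma intconst (a : ℝ) : (∫ _ in Ioo (-π) π, a) = 2*π*a := by
  rw [setIntegral_const, measureReal_def, vol_Ioo, smul_eq_mul]

lemma logint (c : ℂ) (hc : ‖c‖ < 1) (b : ℝ) (hb : 0 < b) :
    (∫ θ in Ioo (-π) π, Real.log (b * ‖1 - c * Complex.exp (θ * Complex.I)‖))
      = 2*π*Real.log b := by
  have hne : ∀ θ : ℝ, ‖1 - c * Complex.exp (θ * Complex.I)‖ ≠ 0 := fun θ =>
    norm_ne_zero_iff.mpr (Complex.slitPlane_ne_zero (slitlem c _ hc (le_of_eq (nexp θ))))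
  have heq : ∀ θ : ℝ, Real.log (b * ‖1 - c * Complex.exp (θ * Complex.I)‖)
      = Real.log b + Real.log ‖1 - c * Complex.exp (θ * Complex.I)‖ := fun θ =>
    Real.log_mul hb.ne' (hne θ)
  simp_rw [heq]
  rw [MeasureTheory.integral_add (show Integrable (fun _ : ℝ => Real.log b) (volume.restrict (Ioo (-π) π)) from
      integrableOn_const measure_Ioo_lt_top.ne)
    (((contlog c hc).integrableOn_Icc).mono_set Set.Ioo_subset_Icc_self),
    intconst, meanvalue' c hc, add_zero]

lemma intlogB (z : ℂ) (hz : ‖z‖ < 1) (s : ℝ) (hs0 : 0 < s) (hs1 : s < 1) (hsr : s ≠ ‖z‖) :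
    (∫ θ in Ioo (-π) π, Real.log ‖z - s * Complex.exp (θ * Complex.I)‖)
      = 2*π * Real.log (max ‖z‖ s) := by
  rcases lt_or_gt_of_ne hsr with h | h
  · -- s < ‖z‖
    have hz0 : z ≠ 0 := by
      intro h0; rw [h0, norm_zero] at h; linarith
    set c : ℂ := (s:ℂ)/z with hcdef
    have hc : ‖c‖ < 1 := by
      rw [hcdef, norm_div, Complex.norm_real, Real.norm_eq_abs, abs_of_pos hs0, div_lt_one]
      · exact h
      · exact norm_pos_iff.mpr hz0
    have key : ∀ θ : ℝ, ‖z - s * Complex.exp (θ * Complex.I)‖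
        = ‖z‖ * ‖1 - c * Complex.exp (θ * Complex.I)‖ := by
      intro θ
      rw [← norm_mul]
      congr 1
      have hzs : z * ((s:ℂ) / z) = s := by field_simp
      rw [hcdef, mul_sub, mul_one, ← mul_assoc, hzs]
    simp_rw [key]
    rw [logint c hc ‖z‖ (norm_pos_iff.mpr hz0), max_eq_left h.le]
  · -- ‖z‖ < s
    set c : ℂ := (starRingEnd ℂ) z / s with hcdef
    have hc : ‖c‖ < 1 := by
      rw [hcdef, norm_div, RCLike.norm_conj, Complex.norm_real, Real.norm_eq_abs,
        abs_of_pos hs0, div_lt_one hs0]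
      exact h
    have key : ∀ θ : ℝ, ‖z - s * Complex.exp (θ * Complex.I)‖
        = s * ‖1 - c * Complex.exp (θ * Complex.I)‖ := by
      intro θ
      set e := Complex.exp (θ * Complex.I) with he
      have hee : e * Complex.exp (-(θ * Complex.I)) = 1 := by
        rw [he, ← Complex.exp_add]; simp
      have h1 : (s:ℂ) * (1 - c * e) = s - (starRingEnd ℂ) z * e := by
        have hsne : (s:ℂ) ≠ 0 := by exact_mod_cast hs0.ne'
        rw [hcdef]; field_simp
      have h4 : (starRingEnd ℂ) (z - s * e) = (starRingEnd ℂ) z - s * Complex.exp (-(θ * Complex.I)) := by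
        rw [map_sub, map_mul, Complex.conj_ofReal, he, ← Complex.exp_conj]
        congr 2
        simp
      have h3 : (s:ℂ) - (starRingEnd ℂ) z * e
          = (-e) * ((starRingEnd ℂ) z - s * Complex.exp (-(θ * Complex.I))) := by
        linear_combination (-(s:ℂ)) * hee
      have h2 : ‖(s:ℂ) - (starRingEnd ℂ) z * e‖ = ‖z - s * e‖ := by
        rw [h3, norm_mul, norm_neg, ← h4, RCLike.norm_conj, he, nexp, one_mul]
      rw [← h2, ← h1, norm_mul, Complex.norm_real, Real.norm_eq_abs, abs_of_pos hs0]
    simp_rw [key]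
    rw [logint c hc s hs0, max_eq_right h.le]


lemma Bne (z : ℂ) (s : ℝ) (hs0 : 0 < s) (hsr : s ≠ ‖z‖) (θ : ℝ) :
    z - (s:ℂ) * Complex.exp (θ * Complex.I) ≠ 0 := by
  intro h0
  apply hsr
  have : z = (s:ℂ) * Complex.exp (θ * Complex.I) := by linear_combination h0
  rw [this, norm_mul, nexp, Complex.norm_real, Real.norm_eq_abs, abs_of_pos hs0, mul_one]

lemma contlogB (z : ℂ) (s : ℝ) (hs0 : 0 < s) (hsr : s ≠ ‖z‖) :
    Continuous fun θ : ℝ => Real.log ‖z - (s:ℂ) * Complex.exp (θ * Complex.I)‖ := by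
  rw [continuous_iff_continuousAt]
  intro θ
  have hne : ‖z - (s:ℂ) * Complex.exp (θ * Complex.I)‖ ≠ 0 :=
    norm_ne_zero_iff.mpr (Bne z s hs0 hsr θ)
  show ContinuousAt ((Real.log ∘ Norm.norm) ∘ fun θ : ℝ => z - (s:ℂ) * Complex.exp (θ * Complex.I)) θ
  exact ContinuousAt.comp ((Real.continuousAt_log hne).comp continuousAt_id.norm) (by fun_prop)

lemma inner_green (z : ℂ) (hz : ‖z‖ < 1) (s : ℝ) (hs0 : 0 < s) (hs1 : s < 1) (hsr : s ≠ ‖z‖) :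
    (∫ θ in Ioo (-π) π, greenD z ((s:ℂ) * Complex.exp (θ * Complex.I)))
      = -Real.log (max ‖z‖ s) := by
  set c2 : ℂ := (starRingEnd ℂ) (z * s) with hc2def
  have hc2 : ‖c2‖ < 1 := by
    rw [hc2def, RCLike.norm_conj, norm_mul, Complex.norm_real, Real.norm_eq_abs, abs_of_pos hs0]
    nlinarith [norm_nonneg z]
  have hAeq : ∀ θ : ℝ, ‖1 - z * (starRingEnd ℂ) ((s:ℂ) * Complex.exp (θ * Complex.I))‖
      = ‖1 - c2 * Complex.exp (θ * Complex.I)‖ := by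
    intro θ
    rw [← RCLike.norm_conj (1 - z * (starRingEnd ℂ) ((s:ℂ) * Complex.exp (θ * Complex.I)))]
    congr 1
    rw [map_sub, map_one, map_mul, Complex.conj_conj, hc2def]
    simp only [map_mul, Complex.conj_ofReal]
    ring
  have hpt : ∀ θ : ℝ, greenD z ((s:ℂ) * Complex.exp (θ * Complex.I))
      = (1/(2*π)) * (Real.log ‖1 - c2 * Complex.exp (θ * Complex.I)‖
          - Real.log ‖z - (s:ℂ) * Complex.exp (θ * Complex.I)‖) := by
    intro θ
    rw [greenD, norm_div, hAeq θ]
    congr 1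
    apply Real.log_div
    · exact norm_ne_zero_iff.mpr (Complex.slitPlane_ne_zero (slitlem c2 _ hc2 (le_of_eq (nexp θ))))
    · exact norm_ne_zero_iff.mpr (Bne z s hs0 hsr θ)
  simp_rw [hpt]
  rw [MeasureTheory.integral_const_mul, MeasureTheory.integral_sub
    (((contlog c2 hc2).integrableOn_Icc).mono_set Set.Ioo_subset_Icc_self)
    (((contlogB z s hs0 hsr).integrableOn_Icc).mono_set Set.Ioo_subset_Icc_self),
    meanvalue' c2 hc2, intlogB z hz s hs0 hs1 hsr, zero_sub]
  field_simp


noncomputable def Haux (s : ℝ) : ℝ := -((s^2/2 - s^4/4) * Real.log s - s^2/4 + s^4/16)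

lemma Haux_cont : Continuous Haux := by
  have : Haux = fun s => -((1/2 - s^2/4) * (s * (s * Real.log s)) - s^2/4 + s^4/16) := by
    funext s; unfold Haux; ring
  rw [this]
  have h := Real.continuous_mul_log
  fun_prop

lemma Haux_deriv (s : ℝ) (hs : s ≠ 0) :
    HasDerivAt Haux (-(s * (1 - s^2) * Real.log s)) s := by
  have h1 : HasDerivAt (fun s : ℝ => s^2/2 - s^4/4) (s - s^3) s := by
    have := ((hasDerivAt_pow 2 s).div_const 2).sub ((hasDerivAt_pow 4 s).div_const 4)
    refine this.congr_deriv ?_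
    ring
  have h2 : HasDerivAt Real.log s⁻¹ s := Real.hasDerivAt_log hs
  have h3 := h1.mul h2
  have h4 : HasDerivAt (fun s : ℝ => s^2/4) (s/2) s := by
    have := (hasDerivAt_pow 2 s).div_const 4
    refine this.congr_deriv ?_; ring
  have h5 : HasDerivAt (fun s : ℝ => s^4/16) (s^3/4) s := by
    have := (hasDerivAt_pow 4 s).div_const 16
    refine this.congr_deriv ?_; ring
  have h6 := ((h3.sub h4).add h5).neg
  refine h6.congr_deriv ?_
  field_simp
  ring

lemma psi2_cont : Continuous fun s : ℝ => -(s * (1 - s^2) * Real.log s) := by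
  have : (fun s : ℝ => -(s * (1 - s^2) * Real.log s))
      = fun s => -((1 - s^2) * (s * Real.log s)) := by funext s; ring
  rw [this]
  have h := Real.continuous_mul_log
  fun_prop

lemma phi_integral (r : ℝ) (hr0 : 0 ≤ r) (hr1 : r < 1) :
    (∫ s in Ioo (0:ℝ) 1, s * (1 - s^2) * (-(Real.log (max r s))))
      = (1 - r^2) * (3 - r^2) / 16 := by
  set φ : ℝ → ℝ := fun s => s * (1 - s^2) * (-(Real.log (max r s))) with hφ
  have hIoo : (∫ s in Ioo (0:ℝ) 1, φ s) = ∫ s in (0:ℝ)..1, φ s := by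
    rw [intervalIntegral.integral_of_le zero_le_one, integral_Ioc_eq_integral_Ioo]
  -- piece 1 : on [0, r]
  have hcong1 : EqOn φ (fun s => Real.log r * (s^3 - s)) (uIcc (0:ℝ) r) := by
    intro s hs
    rw [uIcc_of_le hr0] at hs
    rw [hφ]
    simp only
    rw [max_eq_left hs.2]
    ring
  have hint1 : (∫ s in (0:ℝ)..r, φ s) = Real.log r * (r^4/4 - r^2/2) := by
    rw [intervalIntegral.integral_congr hcong1, intervalIntegral.integral_const_mul]
    rw [intervalIntegral.integral_sub ((continuous_pow 3).intervalIntegrable _ _)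
      (continuous_id'.intervalIntegrable _ _),
      integral_pow, integral_id]
    norm_num
  -- piece 2 : on [r, 1]
  have hcong2 : EqOn φ (fun s => -(s * (1 - s^2) * Real.log s)) (uIcc r 1) := by
    intro s hs
    rw [uIcc_of_le hr1.le] at hs
    rw [hφ]
    simp only
    rw [max_eq_right hs.1]
    ring
  have hint2 : (∫ s in r..(1:ℝ), φ s) = Haux 1 - Haux r := by
    rw [intervalIntegral.integral_congr hcong2]
    apply intervalIntegral.integral_eq_sub_of_hasDeriv_right_of_le hr1.le
    · exact Haux_cont.continuousOn
    · intro x hx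
      exact (Haux_deriv x (lt_of_le_of_lt hr0 hx.1).ne').hasDerivWithinAt
    · exact psi2_cont.intervalIntegrable _ _
  have hsplit : (∫ s in (0:ℝ)..1, φ s) = (∫ s in (0:ℝ)..r, φ s) + ∫ s in r..(1:ℝ), φ s := by
    symm
    apply intervalIntegral.integral_add_adjacent_intervals
    · have hI1 : IntervalIntegrable (fun s : ℝ => Real.log r * (s^3 - s)) volume 0 r :=
        (by fun_prop : Continuous fun s : ℝ => Real.log r * (s^3 - s)).intervalIntegrable _ _
      refine hI1.congr ?_
      intro s hs
      exact ((hcong1 (uIoc_subset_uIcc hs))).symm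
    · refine ((psi2_cont.intervalIntegrable r 1).congr ?_)
      intro s hs
      exact ((hcong2 (uIoc_subset_uIcc hs))).symm
  rw [hIoo, hsplit, hint1, hint2]
  unfold Haux
  rw [Real.log_one]
  ring


lemma normSq_identity (z ζ : ℂ) :
    Complex.normSq (1 - z * (starRingEnd ℂ) ζ) - Complex.normSq (z - ζ)
      = (1 - Complex.normSq z) * (1 - Complex.normSq ζ) := by
  simp only [Complex.normSq_apply, Complex.sub_re, Complex.sub_im, Complex.mul_re, Complex.mul_im,
    Complex.one_re, Complex.one_im, Complex.conj_re, Complex.conj_im]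
  ring

lemma norm_le_lem (z ζ : ℂ) (hz : ‖z‖ < 1) (hζ : ‖ζ‖ < 1) :
    ‖z - ζ‖ ≤ ‖1 - z * (starRingEnd ℂ) ζ‖ := by
  have h1 : Complex.normSq z < 1 := by
    rw [← Complex.sq_norm] at *; nlinarith [norm_nonneg z]
  have h2 : Complex.normSq ζ < 1 := by
    rw [← Complex.sq_norm] at *; nlinarith [norm_nonneg ζ]
  have key := normSq_identity z ζ
  rw [Complex.norm_def, Complex.norm_def]
  apply Real.sqrt_le_sqrt
  nlinarith

lemma green_nonneg (z ζ : ℂ) (hz : ‖z‖ < 1) (hζ : ‖ζ‖ < 1) : 0 ≤ greenD z ζ := by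
  by_cases hzζ : z = ζ
  · simp [greenD, hzζ]
  · have hB : z - ζ ≠ 0 := sub_ne_zero.mpr hzζ
    have hBpos : 0 < ‖z - ζ‖ := norm_pos_iff.mpr hB
    apply mul_nonneg (by positivity)
    apply Real.log_nonneg
    rw [norm_div, le_div_iff₀ hBpos, one_mul]
    exact norm_le_lem z ζ hz hζ

lemma green_pt (z : ℂ) (hz : ‖z‖ < 1) (s : ℝ) (hs0 : 0 < s) (hs1 : s < 1) (hsr : s ≠ ‖z‖) :
    ∀ θ : ℝ, greenD z ((s:ℂ) * Complex.exp (θ * Complex.I))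
      = (1/(2*π)) * (Real.log ‖1 - (starRingEnd ℂ) (z * s) * Complex.exp (θ * Complex.I)‖
          - Real.log ‖z - (s:ℂ) * Complex.exp (θ * Complex.I)‖) := by
  have hc2 : ‖(starRingEnd ℂ) (z * (s:ℂ))‖ < 1 := by
    rw [RCLike.norm_conj, norm_mul, Complex.norm_real, Real.norm_eq_abs, abs_of_pos hs0]
    nlinarith [norm_nonneg z]
  intro θ
  have hAeq : ‖1 - z * (starRingEnd ℂ) ((s:ℂ) * Complex.exp (θ * Complex.I))‖
      = ‖1 - (starRingEnd ℂ) (z * s) * Complex.exp (θ * Complex.I)‖ := by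
    rw [← RCLike.norm_conj (1 - z * (starRingEnd ℂ) ((s:ℂ) * Complex.exp (θ * Complex.I)))]
    congr 1
    rw [map_sub, map_one, map_mul, Complex.conj_conj]
    simp only [map_mul, Complex.conj_ofReal]
    ring
  rw [greenD, norm_div, hAeq]
  congr 1
  apply Real.log_div
  · exact norm_ne_zero_iff.mpr (Complex.slitPlane_ne_zero (slitlem _ _ hc2 (le_of_eq (nexp θ))))
  · exact norm_ne_zero_iff.mpr (Bne z s hs0 hsr θ)

lemma green_circle_integrable (z : ℂ) (hz : ‖z‖ < 1) (s : ℝ) (hs0 : 0 < s) (hs1 : s < 1)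
    (hsr : s ≠ ‖z‖) :
    IntegrableOn (fun θ : ℝ => greenD z ((s:ℂ) * Complex.exp (θ * Complex.I))) (Ioo (-π) π) := by
  have hc2 : ‖(starRingEnd ℂ) (z * (s:ℂ))‖ < 1 := by
    rw [RCLike.norm_conj, norm_mul, Complex.norm_real, Real.norm_eq_abs, abs_of_pos hs0]
    nlinarith [norm_nonneg z]
  simp_rw [green_pt z hz s hs0 hs1 hsr]
  apply IntegrableOn.mono_set _ (Set.Ioo_subset_Icc_self (a := -π) (b := π))
  exact (continuous_const.mul ((contlog _ hc2).sub (contlogB z s hs0 hsr))).integrableOn_Icc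

lemma hsymm_eq (p : ℝ × ℝ) :
    Complex.polarCoord.symm p = (p.1:ℂ) * Complex.exp (p.2 * Complex.I) := by
  rw [Complex.polarCoord_symm_apply, Complex.exp_mul_I]
  push_cast
  ring

theorem stmt1 (z : ℂ) (hz : z ∈ Metric.ball (0 : ℂ) 1) :
    (∫ ζ in Metric.ball (0 : ℂ) 1, (1 - ‖ζ‖ ^ 2) * |greenD z ζ|)
      = (1 - ‖z‖ ^ 2) * (3 - ‖z‖ ^ 2) / 16 ∧
    (∫ ζ in Metric.ball (0 : ℂ) 1, (1 - ‖ζ‖ ^ 2) * |greenD z ζ|)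
      ≤ 3 * (1 - ‖z‖ ^ 2) / 16 := by
  rw [mem_ball_zero_iff] at hz
  set r := ‖z‖ with hrdef
  have hr0 : 0 ≤ r := norm_nonneg z
  set f : ℂ → ℝ := fun ζ => (1 - ‖ζ‖ ^ 2) * |greenD z ζ| with hfdef
  set g : ℝ × ℝ → ℝ :=
    fun p => p.1 * ((1 - p.1^2) * greenD z ((p.1:ℂ) * Complex.exp (p.2 * Complex.I))) with hgdef
  set T : Set (ℝ × ℝ) := Ioo (0:ℝ) 1 ×ˢ Ioo (-π) π with hTdef
  have hTmeas : MeasurableSet T := measurableSet_Ioo.prod measurableSet_Ioo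
  have haes : ∀ᵐ s : ℝ, s ≠ r := by
    rw [ae_iff]
    have : {a : ℝ | ¬ a ≠ r} = {r} := by ext a; simp
    rw [this]
    exact measure_singleton r
  -- Step 1 : polar coordinates
  have step1 : (∫ ζ in Metric.ball (0 : ℂ) 1, f ζ) = ∫ p in T, g p := by
    rw [← MeasureTheory.integral_indicator measurableSet_ball]
    rw [← Complex.integral_comp_polarCoord_symm (fun ζ => (Metric.ball (0:ℂ) 1).indicator f ζ)]
    have e1 : ∀ p ∈ polarCoord.target,
        p.1 • (Metric.ball (0:ℂ) 1).indicator f (Complex.polarCoord.symm p)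
        = ({q : ℝ × ℝ | q.1 < 1}).indicator
            (fun q => q.1 * f (Complex.polarCoord.symm q)) p := by
      intro p hp
      rw [polarCoord_target] at hp
      have hp1 : 0 < p.1 := hp.1
      have hnorm : ‖Complex.polarCoord.symm p‖ = p.1 := by
        rw [hsymm_eq, norm_mul, nexp, Complex.norm_real, Real.norm_eq_abs,
          abs_of_pos hp1, mul_one]
      by_cases h1 : p.1 < 1
      · rw [Set.indicator_of_mem (by exact h1 : p ∈ {q : ℝ × ℝ | q.1 < 1}),
          Set.indicator_of_mem (by rw [mem_ball_zero_iff, hnorm]; exact h1), smul_eq_mul]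
      · rw [Set.indicator_of_notMem (by exact h1 : p ∉ {q : ℝ × ℝ | q.1 < 1}),
          Set.indicator_of_notMem (by rw [mem_ball_zero_iff, hnorm]; exact h1), smul_zero]
    rw [setIntegral_congr_fun polarCoord.open_target.measurableSet e1]
    rw [setIntegral_indicator (by exact measurableSet_lt measurable_fst measurable_const)]
    have e2 : polarCoord.target ∩ {q : ℝ × ℝ | q.1 < 1} = T := by
      rw [polarCoord_target, hTdef]
      ext p
      simp only [Set.mem_inter_iff, Set.mem_prod, Set.mem_Ioi, Set.mem_Ioo, Set.mem_setOf_eq]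
      tauto
    rw [e2]
    apply setIntegral_congr_fun hTmeas
    intro p hp
    rw [hTdef] at hp
    have hp1 : 0 < p.1 := hp.1.1
    have hp1' : p.1 < 1 := hp.1.2
    have hnorm : ‖Complex.polarCoord.symm p‖ = p.1 := by
      rw [hsymm_eq, norm_mul, nexp, Complex.norm_real, Real.norm_eq_abs,
        abs_of_pos hp1, mul_one]
    rw [hfdef, hgdef]
    simp only
    rw [hsymm_eq, ← hsymm_eq p, hnorm]
    congr 1
    congr 1
    rw [hsymm_eq]
    exact abs_of_nonneg (green_nonneg z _ hz (by rw [← hsymm_eq p, hnorm]; exact hp1'))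
  -- measurability of g
  have hgmeas : Measurable g := by
    apply Measurable.mul measurable_fst
    apply Measurable.mul (by fun_prop)
    have hw : Continuous fun p : ℝ × ℝ => ((p.1:ℂ) * Complex.exp (p.2 * Complex.I)) := by
      fun_prop
    unfold greenD
    apply Measurable.const_mul
    apply Real.measurable_log.comp
    apply Measurable.norm
    simp_rw [starRingEnd_apply]
    apply Measurable.div
    · fun_prop
    · fun_prop
  -- Step 2 : integrability on the product
  have step2 : IntegrableOn g T := by
    rw [hTdef, IntegrableOn, Measure.volume_eq_prod, ← Measure.prod_restrict]
    have hmeas : AEStronglyMeasurable g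
        ((volume.restrict (Ioo (0:ℝ) 1)).prod (volume.restrict (Ioo (-π) π))) :=
      hgmeas.aestronglyMeasurable
    rw [integrable_prod_iff hmeas]
    constructor
    · filter_upwards [ae_restrict_mem measurableSet_Ioo, ae_restrict_of_ae haes] with s hs hsne
      have h1 := (green_circle_integrable z hz s hs.1 hs.2 hsne).const_mul (s * (1 - s^2))
      apply (integrable_congr ?_).mp h1
      filter_upwards with θ
      rw [hgdef]
      ring
    · apply Integrable.mono' (integrable_const (1:ℝ))
        (hmeas.norm.integral_prod_right')
      filter_upwards [ae_restrict_mem measurableSet_Ioo, ae_restrict_of_ae haes] with s hs hsne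
      have hval : (∫ θ, ‖g (s, θ)‖ ∂(volume.restrict (Ioo (-π) π)))
          = s * (1 - s^2) * (-(Real.log (max r s))) := by
        have habs : ∀ θ : ℝ, ‖g (s, θ)‖ = s * (1 - s^2)
            * greenD z ((s:ℂ) * Complex.exp (θ * Complex.I)) := by
          intro θ
          have hg0 : 0 ≤ greenD z ((s:ℂ) * Complex.exp (θ * Complex.I)) := by
            apply green_nonneg z _ hz
            rw [norm_mul, nexp, Complex.norm_real, Real.norm_eq_abs, abs_of_pos hs.1, mul_one]
            exact hs.2
          rw [hgdef, Real.norm_eq_abs]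
          simp only
          rw [_root_.abs_of_nonneg (mul_nonneg hs.1.le
            (mul_nonneg (by nlinarith [hs.1, hs.2]) hg0))]
          ring
        simp_rw [habs]
        rw [MeasureTheory.integral_const_mul, inner_green z hz s hs.1 hs.2 hsne]
      rw [hval, Real.norm_eq_abs]
      have hmax1 : max r s ≤ 1 := max_le hz.le hs.2.le
      have hmaxs : s ≤ max r s := le_max_right r s
      have hlogmax : Real.log (max r s) ≤ 0 :=
        Real.log_nonpos (le_max_of_le_right hs.1.le) hmax1
      have hmono : Real.log s ≤ Real.log (max r s) :=
        Real.log_le_log hs.1 hmaxs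
      have hlb : -Real.log s ≤ s⁻¹ - 1 := by
        have := Real.log_le_sub_one_of_pos (inv_pos.mpr hs.1)
        rwa [Real.log_inv] at this
      have hsinv : s * s⁻¹ = 1 := mul_inv_cancel₀ hs.1.ne'
      have hnn2 : 0 ≤ -Real.log s := by linarith
      rw [_root_.abs_of_nonneg (mul_nonneg (mul_nonneg hs.1.le (by nlinarith [hs.1, hs.2]))
        (neg_nonneg.mpr hlogmax))]
      have c1 : s * (1 - s^2) * (-Real.log (max r s)) ≤ s * (1 - s^2) * (-Real.log s) :=
        mul_le_mul_of_nonneg_left (by linarith) (mul_nonneg hs.1.le (by nlinarith [hs.1, hs.2]))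
      have c2 : s * (1 - s^2) * (-Real.log s) ≤ s * (-Real.log s) := by
        nlinarith [mul_nonneg (mul_nonneg (mul_nonneg hs.1.le hs.1.le) hs.1.le) hnn2]
      have c3 : s * (-Real.log s) ≤ 1 - s := by
        nlinarith [mul_le_mul_of_nonneg_left hlb hs.1.le, hsinv]
      linarith [hs.1]
  -- Step 3 : Fubini
  have step3 : (∫ p in T, g p) = ∫ s in Ioo (0:ℝ) 1, ∫ θ in Ioo (-π) π, g (s, θ) := by
    rw [hTdef] at step2 ⊢
    rw [Measure.volume_eq_prod] at step2 ⊢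
    exact setIntegral_prod g step2
  -- Step 4 : inner integral evaluation
  have step4 : (∫ s in Ioo (0:ℝ) 1, ∫ θ in Ioo (-π) π, g (s, θ))
      = ∫ s in Ioo (0:ℝ) 1, s * (1 - s^2) * (-(Real.log (max r s))) := by
    apply setIntegral_congr_ae measurableSet_Ioo
    filter_upwards [haes] with s hsne hs
    have heq : ∀ θ : ℝ, g (s, θ) = (s * (1 - s^2))
        * greenD z ((s:ℂ) * Complex.exp (θ * Complex.I)) := by
      intro θ; rw [hgdef]; ring
    simp_rw [heq]
    rw [MeasureTheory.integral_const_mul, inner_green z hz s hs.1 hs.2 hsne]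
    try ring
  have hmain : (∫ ζ in Metric.ball (0 : ℂ) 1, (1 - ‖ζ‖ ^ 2) * |greenD z ζ|)
      = (1 - r^2) * (3 - r^2) / 16 := by
    calc (∫ ζ in Metric.ball (0 : ℂ) 1, (1 - ‖ζ‖ ^ 2) * |greenD z ζ|)
        = ∫ ζ in Metric.ball (0 : ℂ) 1, f ζ := rfl
      _ = ∫ p in T, g p := step1
      _ = ∫ s in Ioo (0:ℝ) 1, ∫ θ in Ioo (-π) π, g (s, θ) := step3
      _ = ∫ s in Ioo (0:ℝ) 1, s * (1 - s^2) * (-(Real.log (max r s))) := step4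
      _ = (1 - r^2) * (3 - r^2) / 16 := phi_integral r hr0 hz
  refine ⟨hmain, ?_⟩
  rw [hmain]
  have h1 : r^2 ≤ 1 := by nlinarith
  nlinarith [mul_nonneg (sq_nonneg r) (sub_nonneg.mpr h1)]
end

section
/- For K > 1, (1/(2π)) ∫₀^{2π} |e^{it} - e^{iθ}|^{2K-2} dt = 2^{2K-2} Γ(K - 1/2) / (√π (K-1) Γ(K-1)), independently of θ; moreover this quantity is at least 1. -/
open Complex Real intervalIntegral MeasureTheory Set

lemma realBeta {a b : ℝ} (ha : 0 < a) (hb : 0 < b) :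
    ∫ x in (0:ℝ)..1, x ^ (a - 1) * (1 - x) ^ (b - 1)
      = Real.Gamma a * Real.Gamma b / Real.Gamma (a + b) := by
  have hcast : ((∫ x in (0:ℝ)..1, x ^ (a - 1) * (1 - x) ^ (b - 1) : ℝ) : ℂ)
      = Complex.betaIntegral a b := by
    rw [Complex.betaIntegral, ← intervalIntegral.integral_ofReal]
    refine intervalIntegral.integral_congr fun x hx => ?_
    rw [uIcc_of_le zero_le_one] at hx
    push_cast
    rw [Complex.ofReal_cpow hx.1, Complex.ofReal_cpow (by linarith [hx.2] : (0:ℝ) ≤ 1 - x)]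
    push_cast
    ring
  have hG : Complex.Gamma (a + b) ≠ 0 := by
    rw [(by push_cast; ring : ((a:ℂ) + b) = ((a + b : ℝ) : ℂ)), Complex.Gamma_ofReal]
    exact_mod_cast (Real.Gamma_pos_of_pos (by linarith)).ne'
  have := Complex.Gamma_mul_Gamma_eq_betaIntegral (s := a) (t := b)
    (by simpa using ha) (by simpa using hb)
  have h2 : Complex.betaIntegral a b = Complex.Gamma a * Complex.Gamma b / Complex.Gamma (a + b) := by
    rw [eq_div_iff hG, mul_comm, ← this]
  rw [h2] at hcast
  have : ((∫ x in (0:ℝ)..1, x ^ (a - 1) * (1 - x) ^ (b - 1) : ℝ) : ℂ)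
      = ((Real.Gamma a * Real.Gamma b / Real.Gamma (a + b) : ℝ) : ℂ) := by
    rw [hcast]
    push_cast
    rw [← Complex.Gamma_ofReal, ← Complex.Gamma_ofReal, ← Complex.Gamma_ofReal]
    push_cast
    ring
  exact_mod_cast this

lemma betaIntegrand_integrable {p q : ℝ} (hp : -1 < p) (hq : -1 < q) :
    IntervalIntegrable (fun x : ℝ => x ^ p * (1 - x) ^ q) volume 0 1 := by
  have left : ∀ {p q : ℝ}, -1 < p → IntervalIntegrable
      (fun x : ℝ => x ^ p * (1 - x) ^ q) volume 0 (1/2) := by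
    intro p q hp
    apply IntervalIntegrable.mul_continuousOn (intervalIntegral.intervalIntegrable_rpow' hp)
    apply ContinuousOn.rpow_const
    · exact (continuous_const.sub continuous_id).continuousOn
    · intro x hx
      rw [uIcc_of_le (by norm_num : (0:ℝ) ≤ 1/2)] at hx
      left; intro h; rw [sub_eq_zero] at h; linarith [hx.2]
  refine (left hp).trans ?_
  rw [IntervalIntegrable.iff_comp_neg]
  have := ((left (q := p) hq).comp_add_right 1)
  convert this.symm using 1
  · ext1 x
    rw [mul_comm]
    congr 2 <;> ring
  · norm_num
  · norm_num

lemma sin_rpow_cont {s : ℝ} (hs : 0 < s) : Continuous fun x : ℝ => Real.sin x ^ s := by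
  rw [continuous_iff_continuousAt]
  intro x
  exact (Real.continuousAt_rpow_const _ _ (Or.inr hs.le)).comp Real.continuous_sin.continuousAt

lemma two_mul_sin_rpow_integral {s : ℝ} (hs : 0 < s) :
    2 * ∫ x in (0:ℝ)..(π/2), Real.sin x ^ s
      = Real.Gamma ((s + 1) / 2) * Real.Gamma (1 / 2) / Real.Gamma (s / 2 + 1) := by
  set g : ℝ → ℝ := fun u => u ^ ((s + 1) / 2 - 1) * (1 - u) ^ ((1 : ℝ) / 2 - 1) with hg
  set f : ℝ → ℝ := fun x => Real.sin x ^ (2 : ℕ) with hf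
  set f' : ℝ → ℝ := fun x => 2 * Real.sin x * Real.cos x with hf'
  have hpi : (0 : ℝ) < π / 2 := by positivity
  -- pointwise identity on the open interval
  have key : ∀ x ∈ Ioo (0:ℝ) (π/2), (g ∘ f) x * f' x = 2 * Real.sin x ^ s := by
    intro x hx
    have hsx : 0 < Real.sin x := Real.sin_pos_of_pos_of_lt_pi hx.1 (by linarith [hx.2, Real.pi_pos])
    have hcx : 0 < Real.cos x := Real.cos_pos_of_mem_Ioo ⟨by linarith [hx.1], hx.2⟩
    simp only [hg, hf, hf', Function.comp_apply]
    have h1 : (Real.sin x ^ (2:ℕ) : ℝ) ^ ((s + 1) / 2 - 1) = Real.sin x ^ (s - 1) := by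
      rw [← Real.rpow_natCast (Real.sin x) 2, ← Real.rpow_mul hsx.le]
      norm_num
      ring_nf
    have h2 : (1 - Real.sin x ^ (2:ℕ) : ℝ) ^ ((1:ℝ) / 2 - 1) = (Real.cos x)⁻¹ := by
      rw [← Real.cos_sq' x, ← Real.rpow_natCast (Real.cos x) 2, ← Real.rpow_mul hcx.le]
      norm_num
      rw [Real.rpow_neg_one]
    rw [h1, h2]
    rw [show Real.sin x ^ (s - 1) * (Real.cos x)⁻¹ * (2 * Real.sin x * Real.cos x)
        = 2 * (Real.sin x ^ (s - 1) * Real.sin x ^ (1:ℝ)) * ((Real.cos x)⁻¹ * Real.cos x) by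
      rw [Real.rpow_one]; ring]
    rw [← Real.rpow_add hsx, inv_mul_cancel₀ hcx.ne']
    ring_nf
  have hcont2 : Continuous fun x : ℝ => 2 * Real.sin x ^ s := continuous_const.mul (sin_rpow_cont hs)
  have hfc : ContinuousOn f (Set.uIcc 0 (π/2)) := (Real.continuous_sin.pow 2).continuousOn
  have hmin : min (0:ℝ) (π/2) = 0 := min_eq_left hpi.le
  have hmax : max (0:ℝ) (π/2) = π/2 := max_eq_right hpi.le
  have hff' : ∀ x ∈ Ioo (min (0:ℝ) (π/2)) (max (0:ℝ) (π/2)),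
      HasDerivWithinAt f (f' x) (Ioi x) x := by
    intro x _
    have : HasDerivAt f ((2:ℕ) * Real.sin x ^ (2-1) * Real.cos x) x :=
      (Real.hasDerivAt_sin x).pow 2
    simpa [hf', mul_comm, mul_assoc] using this.hasDerivWithinAt
  have himg : ∀ x ∈ Ioo (0:ℝ) (π/2), f x ∈ Ioo (0:ℝ) 1 := by
    intro x hx
    have hsx : 0 < Real.sin x := Real.sin_pos_of_pos_of_lt_pi hx.1 (by linarith [hx.2, Real.pi_pos])
    have hcx : 0 < Real.cos x := Real.cos_pos_of_mem_Ioo ⟨by linarith [hx.1], hx.2⟩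
    constructor
    · positivity
    · have h1 := Real.sin_sq_add_cos_sq x
      have h2 : 0 < Real.cos x ^ 2 := pow_pos hcx 2
      simp only [hf]
      linarith
  have hgc : ContinuousOn g (Ioo (0:ℝ) 1) := by
    apply ContinuousOn.mul
    · exact ContinuousOn.rpow_const continuousOn_id fun x hx => Or.inl hx.1.ne'
    · exact ContinuousOn.rpow_const (continuous_const.sub continuous_id).continuousOn
        fun x hx => Or.inl (sub_pos.mpr hx.2).ne'
  have hbi : IntegrableOn g (Icc (0:ℝ) 1) := by
    rw [← intervalIntegrable_iff_integrableOn_Icc_of_le zero_le_one]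
    exact betaIntegrand_integrable (by linarith) (by norm_num)
  have sub := intervalIntegral.integral_comp_mul_deriv''' (a := 0) (b := π/2) hfc hff'
    (hgc.mono (by rw [hmin, hmax]; rintro u ⟨x, hx, rfl⟩; exact himg x hx))
    (hbi.mono_set (by
      rw [uIcc_of_le hpi.le]
      rintro u ⟨x, hx, rfl⟩
      refine ⟨by positivity, ?_⟩
      have h1 := Real.sin_sq_add_cos_sq x
      have h2 : 0 ≤ Real.cos x ^ 2 := sq_nonneg _
      simp only [hf]
      linarith))
    (by
      rw [uIcc_of_le hpi.le, integrableOn_Icc_iff_integrableOn_Ioo]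
      exact ((hcont2.integrableOn_Icc).mono_set Ioo_subset_Icc_self).congr_fun
        (fun x hx => (key x hx).symm) measurableSet_Ioo)
  have hlhs : ∫ x in (0:ℝ)..(π/2), (g ∘ f) x * f' x = ∫ x in (0:ℝ)..(π/2), 2 * Real.sin x ^ s := by
    rw [intervalIntegral.integral_of_le hpi.le, intervalIntegral.integral_of_le hpi.le,
      ← MeasureTheory.setIntegral_congr_set MeasureTheory.Ioo_ae_eq_Ioc,
      ← MeasureTheory.setIntegral_congr_set MeasureTheory.Ioo_ae_eq_Ioc]
    exact MeasureTheory.setIntegral_congr_fun measurableSet_Ioo key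
  have hends : f 0 = 0 ∧ f (π/2) = 1 := by
    constructor <;> simp [hf]
  rw [hlhs, hends.1, hends.2] at sub
  rw [intervalIntegral.integral_const_mul] at sub
  rw [sub, hg]
  have := realBeta (a := (s+1)/2) (b := (1:ℝ)/2) (by linarith) (by norm_num)
  rw [this]
  norm_num
  rw [show (s+1)/2 + 1/2 = s/2 + 1 by ring]

lemma sin_rpow_pi {s : ℝ} (hs : 0 < s) :
    ∫ x in (0:ℝ)..π, Real.sin x ^ s
      = Real.Gamma ((s + 1) / 2) * Real.Gamma (1 / 2) / Real.Gamma (s / 2 + 1) := by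
  have hsplit : ∫ x in (0:ℝ)..π, Real.sin x ^ s
      = (∫ x in (0:ℝ)..(π/2), Real.sin x ^ s) + ∫ x in (π/2:ℝ)..π, Real.sin x ^ s := by
    rw [intervalIntegral.integral_add_adjacent_intervals] <;>
      exact ((sin_rpow_cont hs).intervalIntegrable _ _)
  have hrefl : ∫ x in (π/2:ℝ)..π, Real.sin x ^ s = ∫ x in (0:ℝ)..(π/2), Real.sin x ^ s := by
    have := intervalIntegral.integral_comp_sub_left (a := π/2) (b := π)
      (fun x => Real.sin x ^ s) π
    rw [show π - π = (0:ℝ) by ring, show π - π/2 = π/2 by ring] at this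
    rw [← this]
    refine intervalIntegral.integral_congr fun x hx => ?_
    rw [Real.sin_pi_sub]
  rw [hsplit, hrefl, ← two_mul, ← two_mul_sin_rpow_integral hs]

lemma norm_exp_sub_exp (t θ : ℝ) :
    ‖Complex.exp (t * Complex.I) - Complex.exp (θ * Complex.I)‖
      = 2 * |Real.sin ((t - θ) / 2)| := by
  have h : Complex.exp (t * Complex.I) - Complex.exp (θ * Complex.I)
      = Complex.exp ((((t + θ) / 2 : ℝ) : ℂ) * Complex.I)
        * (2 * Complex.sin (((t - θ) / 2 : ℝ) : ℂ) * Complex.I) := by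
    have e1 : Complex.exp ((t:ℂ) * Complex.I)
        = Complex.exp ((((t + θ) / 2 : ℝ) : ℂ) * Complex.I)
          * Complex.exp ((((t - θ) / 2 : ℝ) : ℂ) * Complex.I) := by
      rw [← Complex.exp_add]; congr 1; push_cast; ring
    have e2 : Complex.exp ((θ:ℂ) * Complex.I)
        = Complex.exp ((((t + θ) / 2 : ℝ) : ℂ) * Complex.I)
          * Complex.exp (-((((t - θ) / 2 : ℝ) : ℂ)) * Complex.I) := by
      rw [← Complex.exp_add]; congr 1; push_cast; ring
    rw [e1, e2, Complex.sin]
    linear_combination (Complex.exp ((((t + θ) / 2 : ℝ) : ℂ) * Complex.I)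
      * (Complex.exp ((((t - θ) / 2 : ℝ) : ℂ) * Complex.I)
        - Complex.exp (-((((t - θ) / 2 : ℝ) : ℂ)) * Complex.I))) * Complex.I_sq
  rw [h]
  simp only [norm_mul, Complex.norm_exp, Complex.norm_I]
  rw [← Complex.ofReal_sin, Complex.norm_real]
  simp [Complex.mul_re]

lemma main_integral {s : ℝ} (hs : 0 < s) (θ : ℝ) :
    ∫ t in (0:ℝ)..(2*π), (2 * |Real.sin ((t - θ) / 2)|) ^ s
      = 2 ^ (s+1) * ∫ x in (0:ℝ)..π, Real.sin x ^ s := by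
  set F : ℝ → ℝ := fun t => (2 * |Real.sin (t / 2)|) ^ s with hF
  have hper : Function.Periodic F (2 * π) := by
    intro t
    simp only [hF]
    rw [show (t + 2*π)/2 = t/2 + π by ring, Real.sin_add_pi, abs_neg]
  have h1 : ∫ t in (0:ℝ)..(2*π), (2 * |Real.sin ((t - θ) / 2)|) ^ s
      = ∫ t in (0:ℝ)..(2*π), F t := by
    have := intervalIntegral.integral_comp_sub_right (a := 0) (b := 2*π) F θ
    rw [this]
    have := hper.intervalIntegral_add_eq (0 - θ) 0
    rw [zero_add] at this
    rw [show (0:ℝ) - θ + 2*π = 2*π - θ by ring] at this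
    exact this
  have h2 : (2:ℝ) * ∫ u in (0:ℝ)..π, F (2 * u) = ∫ t in (0:ℝ)..(2*π), F t := by
    have := intervalIntegral.mul_integral_comp_mul_left (f := F) (a := 0) (b := π) (c := 2)
    simpa using this
  have h3 : ∫ u in (0:ℝ)..π, F (2 * u) = 2 ^ s * ∫ x in (0:ℝ)..π, Real.sin x ^ s := by
    rw [← intervalIntegral.integral_const_mul]
    refine intervalIntegral.integral_congr fun x hx => ?_
    rw [Set.uIcc_of_le Real.pi_pos.le] at hx
    have hsin : 0 ≤ Real.sin x := Real.sin_nonneg_of_nonneg_of_le_pi hx.1 hx.2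
    simp only [hF]
    rw [show (2*x)/2 = x by ring, _root_.abs_of_nonneg hsin,
      Real.mul_rpow (by norm_num) hsin]
  rw [h1, ← h2, h3, Real.rpow_add (by norm_num : (0:ℝ) < 2), Real.rpow_one]
  ring

theorem stmt17 (K : ℝ) (hK : 1 < K) (θ : ℝ) :
    (1 / (2 * Real.pi)) * (∫ t in (0:ℝ)..(2 * Real.pi),
        ‖Complex.exp (t * Complex.I) - Complex.exp (θ * Complex.I)‖ ^ (2 * K - 2))
      = 2 ^ (2 * K - 2) * Real.Gamma (K - 1 / 2)
          / (Real.sqrt Real.pi * (K - 1) * Real.Gamma (K - 1)) ∧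
    1 ≤ 2 ^ (2 * K - 2) * Real.Gamma (K - 1 / 2)
          / (Real.sqrt Real.pi * (K - 1) * Real.Gamma (K - 1)) := by
  have hs : 0 < 2 * K - 2 := by linarith
  have hK1 : (0:ℝ) < K - 1 := by linarith
  have hGK1 : 0 < Real.Gamma (K - 1) := Real.Gamma_pos_of_pos hK1
  have hGK : Real.Gamma K = (K - 1) * Real.Gamma (K - 1) := by
    have := Real.Gamma_add_one (s := K - 1) hK1.ne'
    rw [show K - 1 + 1 = K by ring] at this
    exact this
  have hGKpos : 0 < Real.Gamma K := Real.Gamma_pos_of_pos (by linarith)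
  have hGhalf : 0 < Real.Gamma (K - 1/2) := Real.Gamma_pos_of_pos (by linarith)
  have hsqrt : 0 < Real.sqrt π := Real.sqrt_pos.mpr Real.pi_pos
  -- the value of the integral
  have hint : ∫ t in (0:ℝ)..(2 * π),
        ‖Complex.exp (t * Complex.I) - Complex.exp (θ * Complex.I)‖ ^ (2 * K - 2)
      = 2 ^ (2 * K - 1) * (Real.Gamma (K - 1/2) * Real.sqrt π / Real.Gamma K) := by
    have e1 : ∫ t in (0:ℝ)..(2 * π),
          ‖Complex.exp (t * Complex.I) - Complex.exp (θ * Complex.I)‖ ^ (2 * K - 2)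
        = ∫ t in (0:ℝ)..(2 * π), (2 * |Real.sin ((t - θ) / 2)|) ^ (2 * K - 2) := by
      refine intervalIntegral.integral_congr fun t _ => ?_
      rw [norm_exp_sub_exp]
    rw [e1, main_integral hs θ, sin_rpow_pi hs,
      show (2 * K - 2 + 1) / 2 = K - 1/2 by ring,
      show (2 * K - 2) / 2 + 1 = K by ring,
      show 2 * K - 2 + 1 = 2 * K - 1 by ring, Real.Gamma_one_half_eq]
  constructor
  · rw [hint, hGK]
    rw [show (2:ℝ) * K - 1 = (2 * K - 2) + 1 by ring,
      Real.rpow_add_one (by norm_num : (2:ℝ) ≠ 0)]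
    field_simp
    rw [Real.sq_sqrt Real.pi_pos.le]
    ring_nf
  · -- reduce to Gamma (2K-1) / Gamma K ^ 2 using duplication
    have dup := Real.Gamma_mul_Gamma_add_half (K - 1/2)
    rw [show K - 1/2 + 1/2 = K by ring, show 2 * (K - 1/2) = 2 * K - 1 by ring,
      show 1 - (2 * K - 1) = 2 - 2 * K by ring] at dup
    have hG2K : 0 < Real.Gamma (2 * K - 1) := Real.Gamma_pos_of_pos (by linarith)
    have hGhalf_eq : Real.Gamma (K - 1/2)
        = Real.Gamma (2 * K - 1) * 2 ^ (2 - 2 * K) * Real.sqrt π / Real.Gamma K := by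
      field_simp at dup ⊢
      linarith [dup]
    have hrhs : 2 ^ (2 * K - 2) * Real.Gamma (K - 1 / 2)
          / (Real.sqrt Real.pi * (K - 1) * Real.Gamma (K - 1))
        = Real.Gamma (2 * K - 1) / Real.Gamma K ^ 2 := by
      rw [hGhalf_eq]
      have h2 : (2:ℝ) ^ (2 * K - 2) * 2 ^ (2 - 2 * K) = 1 := by
        rw [← Real.rpow_add (by norm_num : (0:ℝ) < 2)]
        norm_num
      have h2' : (2:ℝ) ^ (2 * (K - 1)) * 2 ^ (2 * (1 - K)) = 1 := by
        rw [show 2 * (K - 1) = 2 * K - 2 by ring, show 2 * (1 - K) = 2 - 2 * K by ring, h2]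
      field_simp
      linear_combination Real.Gamma K * h2' + hGK
    rw [hrhs]
    -- log-convexity
    have cv := Real.convexOn_log_Gamma.2 (Set.mem_Ioi.mpr one_pos)
      (Set.mem_Ioi.mpr (by linarith : (0:ℝ) < 2 * K - 1))
      (by norm_num : (0:ℝ) ≤ 1/2) (by norm_num : (0:ℝ) ≤ 1/2) (by norm_num)
    rw [show (1/2 : ℝ) • (1:ℝ) + (1/2 : ℝ) • (2 * K - 1) = K by simp; ring] at cv
    simp only [Function.comp_apply, Real.Gamma_one, Real.log_one, smul_eq_mul,
      mul_zero, zero_add] at cv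
    have hlog : Real.log (Real.Gamma K ^ 2) ≤ Real.log (Real.Gamma (2 * K - 1)) := by
      rw [Real.log_pow]
      push_cast
      linarith [cv]
    have := (Real.log_le_log_iff (by positivity) hG2K).mp hlog
    rw [le_div_iff₀ (by positivity), one_mul]
    exact this
end
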